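/- Let τ : ℝ⁴ → ℝ be a smooth, everywhere positive function of the variables (x, y, t, t'). Suppose τ satisfies the two Hirota bilinear equations (D_x⁴ − 4 D_x D_{t'}) τ·τ = 0 and (D_y D_x³ + 2 D_y D_{t'} − 6 D_t D_x) τ·τ = 0 at every point. Define u = 2 ∂_x² log τ and w = 2 ∂_x ∂_y log τ. Then ∂_x w = ∂_y u everywhere, and u satisfies the (2+1)-dimensional KdV equation ∂_t u = (1/4) ∂_x²∂_y u + u ∂_y u + (1/2) (∂_x u) w. -/

import Mathlib

noncomputable section

/-- Partial derivative in coordinate direction `i` of a function on `Fin 4 → ℝ`.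
Coordinates: `q 0 = x`, `q 1 = y`, `q 2 = t`, `q 3 = t'`. -/
def pd (i : Fin 4) (F : (Fin 4 → ℝ) → ℝ) : (Fin 4 → ℝ) → ℝ :=
  fun q => fderiv ℝ F q (Pi.single i 1)

/-- Iterated partial derivatives along a list of coordinate directions. -/
def pdList : List (Fin 4) → ((Fin 4 → ℝ) → ℝ) → ((Fin 4 → ℝ) → ℝ)
  | [], F => F
  | i :: js, F => pd i (pdList js F)

/-- The Hirota bilinear operator `D` along a list of coordinate directions:
`(D_{i₁} ⋯ D_{iₘ} f·g)(q) = ∂_{s_{i₁}} ⋯ ∂_{s_{iₘ}} [f(q+s) g(q−s)]` at `s = 0`. -/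
def hirotaD (idx : List (Fin 4)) (f g : (Fin 4 → ℝ) → ℝ) (q : Fin 4 → ℝ) : ℝ :=
  pdList idx (fun s => f (q + s) * g (q - s)) 0

/-- `u = 2 ∂_x² log τ`. -/
def uFn (τ : (Fin 4 → ℝ) → ℝ) : (Fin 4 → ℝ) → ℝ :=
  fun q => 2 * pd 0 (pd 0 (fun q' => Real.log (τ q'))) q

/-- `w = 2 ∂_x ∂_y log τ`. -/
def wFn (τ : (Fin 4 → ℝ) → ℝ) : (Fin 4 → ℝ) → ℝ :=
  fun q => 2 * pd 0 (pd 1 (fun q' => Real.log (τ q'))) q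

section API

variable {F f g : (Fin 4 → ℝ) → ℝ} {i j : Fin 4}

@[fun_prop]
theorem pd_contDiff (hF : ContDiff ℝ (⊤ : ℕ∞) F) (i : Fin 4) : ContDiff ℝ (⊤ : ℕ∞) (pd i F) :=
  (contDiff_infty_iff_fderiv.mp hF).2.clm_apply contDiff_const

@[fun_prop]
theorem pd_differentiable (hF : ContDiff ℝ (⊤ : ℕ∞) F) (i : Fin 4) :
    Differentiable ℝ (pd i F) :=
  (pd_contDiff hF i).differentiable (by simp)

theorem pd_comm (hF : ContDiff ℝ (⊤ : ℕ∞) F) (i j : Fin 4) :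
    pd i (pd j F) = pd j (pd i F) := by
  funext q
  have hd : DifferentiableAt ℝ (fderiv ℝ F) q :=
    ((contDiff_infty_iff_fderiv.mp hF).2.differentiable (by simp)) q
  have hsymm : IsSymmSndFDerivAt ℝ F q :=
    (hF.contDiffAt (n := (⊤:ℕ∞))).isSymmSndFDerivAt
      (by rw [minSmoothness_of_isRCLikeNormedField, show ((2:WithTop ℕ∞)) = ((2:ℕ∞):WithTop ℕ∞) by norm_cast]
          exact WithTop.coe_le_coe.mpr le_top)
  have key : ∀ a b : Fin 4, pd a (pd b F) q
      = fderiv ℝ (fderiv ℝ F) q (Pi.single a 1) (Pi.single b 1) := by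
    intro a b
    show fderiv ℝ (fun p => fderiv ℝ F p (Pi.single b 1)) q (Pi.single a 1) = _
    rw [fderiv_clm_apply hd (differentiableAt_const _)]
    simp
  rw [key, key, hsymm]

theorem pdc10 (hF : ContDiff ℝ (⊤ : ℕ∞) F) : pd 1 (pd 0 F) = pd 0 (pd 1 F) := pd_comm hF 1 0
theorem pdc20 (hF : ContDiff ℝ (⊤ : ℕ∞) F) : pd 2 (pd 0 F) = pd 0 (pd 2 F) := pd_comm hF 2 0
theorem pdc30 (hF : ContDiff ℝ (⊤ : ℕ∞) F) : pd 3 (pd 0 F) = pd 0 (pd 3 F) := pd_comm hF 3 0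
theorem pdc21 (hF : ContDiff ℝ (⊤ : ℕ∞) F) : pd 2 (pd 1 F) = pd 1 (pd 2 F) := pd_comm hF 2 1
theorem pdc31 (hF : ContDiff ℝ (⊤ : ℕ∞) F) : pd 3 (pd 1 F) = pd 1 (pd 3 F) := pd_comm hF 3 1
theorem pdc32 (hF : ContDiff ℝ (⊤ : ℕ∞) F) : pd 3 (pd 2 F) = pd 2 (pd 3 F) := pd_comm hF 3 2

theorem pd_add (hf : Differentiable ℝ f) (hg : Differentiable ℝ g) (i : Fin 4) :
    pd i (fun q => f q + g q) = fun q => pd i f q + pd i g q := by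
  funext q; exact congrFun (congrArg _ (fderiv_add (hf q) (hg q))) _

theorem pd_sub (hf : Differentiable ℝ f) (hg : Differentiable ℝ g) (i : Fin 4) :
    pd i (fun q => f q - g q) = fun q => pd i f q - pd i g q := by
  funext q; exact congrFun (congrArg _ (fderiv_sub (hf q) (hg q))) _

theorem pd_mul (hf : Differentiable ℝ f) (hg : Differentiable ℝ g) (i : Fin 4) :
    pd i (fun q => f q * g q) = fun q => pd i f q * g q + f q * pd i g q := by
  funext q
  show (fderiv ℝ (fun q => f q * g q) q) (Pi.single i 1) = _
  rw [fderiv_fun_mul (hf q) (hg q)]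
  simp [pd]; ring

theorem pd_const (c : ℝ) (i : Fin 4) : pd i (fun _ => c) = fun _ => 0 := by
  funext q; simp [pd]

theorem pd_shift_mul (hf : ContDiff ℝ (⊤:ℕ∞) f) (hg : ContDiff ℝ (⊤:ℕ∞) g)
    (q : Fin 4 → ℝ) (i : Fin 4) :
    pd i (fun s => f (q + s) * g (q - s)) =
      fun s => pd i f (q + s) * g (q - s) - f (q + s) * pd i g (q - s) := by
  funext s
  have h1 : HasFDerivAt (fun s : Fin 4 → ℝ => f (q + s))
      ((fderiv ℝ f (q + s)).comp (ContinuousLinearMap.id ℝ _)) s :=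
    HasFDerivAt.comp s (hf.differentiable (by simp) _).hasFDerivAt
      ((hasFDerivAt_id s).const_add q)
  have h2 : HasFDerivAt (fun s : Fin 4 → ℝ => g (q - s))
      ((fderiv ℝ g (q - s)).comp (-(ContinuousLinearMap.id ℝ _))) s :=
    HasFDerivAt.comp s (hg.differentiable (by simp) _).hasFDerivAt
      ((hasFDerivAt_id s).const_sub q)
  have h3 := (h1.fun_mul h2).fderiv
  show (fderiv ℝ (fun s => f (q + s) * g (q - s)) s) (Pi.single i 1) = _
  rw [h3]
  simp [pd]
  ring

theorem pd_log {τ : (Fin 4 → ℝ) → ℝ} (hs : ContDiff ℝ (⊤:ℕ∞) τ) (hpos : ∀ q, 0 < τ q)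
    (i : Fin 4) :
    pd i τ = fun q => pd i (fun q' => Real.log (τ q')) q * τ q := by
  funext q
  have h := ((hs.differentiable (by simp) q).hasFDerivAt).log (hpos q).ne'
  show pd i τ q = (fderiv ℝ (fun q' => Real.log (τ q')) q) (Pi.single i 1) * τ q
  rw [h.fderiv]
  simp only [ContinuousLinearMap.coe_smul', Pi.smul_apply, smul_eq_mul]
  rw [mul_comm, ← mul_assoc, mul_inv_cancel₀ (hpos q).ne', one_mul]
  rfl

end API

/-- if a smooth positive `τ` satisfies the two Hirota bilinear equations
`(D_x⁴ − 4 D_x D_{t'}) τ·τ = 0` and `(D_y D_x³ + 2 D_y D_{t'} − 6 D_t D_x) τ·τ = 0`,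
then `u = 2 ∂_x² log τ` solves the (2+1)-dimensional KdV equation
`∂_t u = (1/4) ∂_x²∂_y u + u ∂_y u + (1/2)(∂_x u) w` with `w = 2 ∂_x∂_y log τ`
satisfying `∂_x w = ∂_y u`. -/
theorem twoPlusOne_KdV_from_bilinear (τ : (Fin 4 → ℝ) → ℝ)
    (hsmooth : ContDiff ℝ (⊤ : ℕ∞) τ) (hpos : ∀ q, 0 < τ q)
    (hbil1 : ∀ q, hirotaD [0, 0, 0, 0] τ τ q - 4 * hirotaD [0, 3] τ τ q = 0)
    (hbil2 : ∀ q, hirotaD [1, 0, 0, 0] τ τ q + 2 * hirotaD [1, 3] τ τ q -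
        6 * hirotaD [2, 0] τ τ q = 0) :
    ∀ q : Fin 4 → ℝ,
      pd 0 (wFn τ) q = pd 1 (uFn τ) q ∧
      pd 2 (uFn τ) q =
        (1 / 4) * pd 0 (pd 0 (pd 1 (uFn τ))) q +
          uFn τ q * pd 1 (uFn τ) q +
          (1 / 2) * pd 0 (uFn τ) q * wFn τ q := by
  have hd : Differentiable ℝ τ := hsmooth.differentiable (by simp)
  have hL : ContDiff ℝ (⊤:ℕ∞) (fun q' => Real.log (τ q')) :=
    hsmooth.log (fun q => (hpos q).ne')
  have hLd : Differentiable ℝ (fun q' => Real.log (τ q')) := hL.differentiable (by simp)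
  have hτ : ∀ i : Fin 4, pd i τ =
      fun q => pd i (fun q' => Real.log (τ q')) q * τ q := pd_log hsmooth hpos
  -- the two bilinear equations in terms of φ = log τ
  have E1 : ∀ p : Fin 4 → ℝ,
      2 * pd 0 (pd 0 (pd 0 (pd 0 (fun q' => Real.log (τ q'))))) p
        + 12 * pd 0 (pd 0 (fun q' => Real.log (τ q'))) p
            * pd 0 (pd 0 (fun q' => Real.log (τ q'))) p
        - 8 * pd 0 (pd 3 (fun q' => Real.log (τ q'))) p = 0 := by
    intro p
    have h := hbil1 p
    simp (disch := fun_prop) only [hirotaD, pdList, pd_shift_mul, pd_sub] at h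
    simp only [add_zero, sub_zero] at h
    simp (disch := fun_prop) only [hτ, pd_mul, pd_add, pd_sub, pd_const,
      pdc10, pdc20, pdc30, pdc21, pdc31, pdc32,
      zero_mul, mul_zero, zero_add, add_zero] at h
    have h2 : τ p * τ p *
        (2 * pd 0 (pd 0 (pd 0 (pd 0 (fun q' => Real.log (τ q'))))) p
          + 12 * pd 0 (pd 0 (fun q' => Real.log (τ q'))) p
              * pd 0 (pd 0 (fun q' => Real.log (τ q'))) p
          - 8 * pd 0 (pd 3 (fun q' => Real.log (τ q'))) p) = 0 := by
      linear_combination h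
    rcases mul_eq_zero.mp h2 with h3 | h3
    · exact absurd h3 (mul_ne_zero (hpos p).ne' (hpos p).ne')
    · exact h3
  have E2 : ∀ p : Fin 4 → ℝ,
      2 * pd 0 (pd 0 (pd 0 (pd 1 (fun q' => Real.log (τ q'))))) p
        + 12 * pd 0 (pd 1 (fun q' => Real.log (τ q'))) p
            * pd 0 (pd 0 (fun q' => Real.log (τ q'))) p
        + 4 * pd 1 (pd 3 (fun q' => Real.log (τ q'))) p
        - 12 * pd 0 (pd 2 (fun q' => Real.log (τ q'))) p = 0 := by
    intro p
    have h := hbil2 p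
    simp (disch := fun_prop) only [hirotaD, pdList, pd_shift_mul, pd_sub] at h
    simp only [add_zero, sub_zero] at h
    simp (disch := fun_prop) only [hτ, pd_mul, pd_add, pd_sub, pd_const,
      pdc10, pdc20, pdc30, pdc21, pdc31, pdc32,
      zero_mul, mul_zero, zero_add, add_zero] at h
    have h2 : τ p * τ p *
        (2 * pd 0 (pd 0 (pd 0 (pd 1 (fun q' => Real.log (τ q'))))) p
          + 12 * pd 0 (pd 1 (fun q' => Real.log (τ q'))) p
              * pd 0 (pd 0 (fun q' => Real.log (τ q'))) p
          + 4 * pd 1 (pd 3 (fun q' => Real.log (τ q'))) p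
          - 12 * pd 0 (pd 2 (fun q' => Real.log (τ q'))) p) = 0 := by
      linear_combination h
    rcases mul_eq_zero.mp h2 with h3 | h3
    · exact absurd h3 (mul_ne_zero (hpos p).ne' (hpos p).ne')
    · exact h3
  -- derivatives of these relations
  have E1f : (fun p => 2 * pd 0 (pd 0 (pd 0 (pd 0 (fun q' => Real.log (τ q'))))) p
        + 12 * pd 0 (pd 0 (fun q' => Real.log (τ q'))) p
            * pd 0 (pd 0 (fun q' => Real.log (τ q'))) p
        - 8 * pd 0 (pd 3 (fun q' => Real.log (τ q'))) p) = (fun _ => (0:ℝ)) :=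
    funext E1
  have E2f : (fun p => 2 * pd 0 (pd 0 (pd 0 (pd 1 (fun q' => Real.log (τ q'))))) p
        + 12 * pd 0 (pd 1 (fun q' => Real.log (τ q'))) p
            * pd 0 (pd 0 (fun q' => Real.log (τ q'))) p
        + 4 * pd 1 (pd 3 (fun q' => Real.log (τ q'))) p
        - 12 * pd 0 (pd 2 (fun q' => Real.log (τ q'))) p) = (fun _ => (0:ℝ)) :=
    funext E2
  intro q
  have k1 : pd 1 (fun p => 2 * pd 0 (pd 0 (pd 0 (pd 0 (fun q' => Real.log (τ q'))))) p
        + 12 * pd 0 (pd 0 (fun q' => Real.log (τ q'))) p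
            * pd 0 (pd 0 (fun q' => Real.log (τ q'))) p
        - 8 * pd 0 (pd 3 (fun q' => Real.log (τ q'))) p) q = 0 := by
    rw [E1f, pd_const]
  have k2 : pd 0 (fun p => 2 * pd 0 (pd 0 (pd 0 (pd 1 (fun q' => Real.log (τ q'))))) p
        + 12 * pd 0 (pd 1 (fun q' => Real.log (τ q'))) p
            * pd 0 (pd 0 (fun q' => Real.log (τ q'))) p
        + 4 * pd 1 (pd 3 (fun q' => Real.log (τ q'))) p
        - 12 * pd 0 (pd 2 (fun q' => Real.log (τ q'))) p) q = 0 := by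
    rw [E2f, pd_const]
  simp (disch := fun_prop) only [pd_mul, pd_add, pd_sub, pd_const,
      pdc10, pdc20, pdc30, pdc21, pdc31, pdc32,
      zero_mul, mul_zero, zero_add, add_zero] at k1 k2
  unfold uFn wFn
  constructor
  · simp (disch := fun_prop) only [pd_mul, pd_add, pd_sub, pd_const,
      pdc10, pdc20, pdc30, pdc21, pdc31, pdc32,
      zero_mul, mul_zero, zero_add, add_zero]
  · simp (disch := fun_prop) only [pd_mul, pd_add, pd_sub, pd_const,
      pdc10, pdc20, pdc30, pdc21, pdc31, pdc32,
      zero_mul, mul_zero, zero_add, add_zero]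
    linear_combination (-1/12 : ℝ) * k1 - (1/6 : ℝ) * k2
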